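/- Fix α > 0 and, for n ∈ ℕ, define ψ_n(u,v,φ) = (n!/((2α)_n Γ(α))) Σ_{k=0}^{⌊n/2⌋} (−1)^k 2^{n−2k} Γ(n−k+α)/(k!(n−2k)!) · (u − v cos φ)^{n−2k} · (u² + v² − 2uv cos φ)^{k}. Then for every integer n ≥ 1 and all u, v ∈ ℝ and φ ∈ [0, π], the partial derivative of ψ_n with respect to u satisfies ∂_u ψ_n(u,v,φ) = n · ψ_{n−1}(u,v,φ). -/

import Mathlib

open MeasureTheory Real Set
open scoped ENNReal

noncomputable section

namespace Paper

/-- The normalized Bessel function of index `α`: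
`j_α(z) = Γ(α+1) Σ_{k} (−1)^k/(k! Γ(α+k+1)) (z/2)^{2k}`. -/
def besselJ (α : ℝ) (z : ℝ) : ℝ :=
  Real.Gamma (α + 1) *
    ∑' k : ℕ, (-1 : ℝ) ^ k / ((k.factorial : ℝ) * Real.Gamma (α + k + 1)) * (z / 2) ^ (2 * k)

/-- The Gegenbauer polynomial
`C_m^α(t) = (1/Γ(α)) Σ_{k=0}^{⌊m/2⌋} (−1)^k Γ(m−k+α)/(k!(m−2k)!) (2t)^{m−2k}`. -/
def gegenbauer (α : ℝ) (m : ℕ) (t : ℝ) : ℝ :=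
  (1 / Real.Gamma α) *
    ∑ k ∈ Finset.range (m / 2 + 1),
      (-1 : ℝ) ^ k * Real.Gamma (((m - k : ℕ) : ℝ) + α) /
          ((k.factorial : ℝ) * ((m - 2 * k).factorial : ℝ)) * (2 * t) ^ (m - 2 * k)

/-- The Pochhammer symbol `(a)_m = Γ(a+m)/Γ(a)`. -/
def poch (a : ℝ) (m : ℕ) : ℝ := Real.Gamma (a + m) / Real.Gamma a

/-- The constant `C_α = Γ(α+1)/(√π Γ(α+1/2))`. -/
def Cconst (α : ℝ) : ℝ := Real.Gamma (α + 1) / (Real.sqrt π * Real.Gamma (α + 1 / 2))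

/-- `δ(u,v,φ) = √(u² + v² − 2uv cos φ)`. -/
def del (u v φ : ℝ) : ℝ := Real.sqrt (u ^ 2 + v ^ 2 - 2 * u * v * Real.cos φ)

/-- `ψ_n(u,v,φ)`, the polynomial expression of
`(n!/(2α)_n) δ^n C_n^α((u − v cos φ)/δ)` with `δ = √(u²+v²−2uv cos φ)`. -/
def psiN (α : ℝ) (n : ℕ) (u v φ : ℝ) : ℝ :=
  ((n.factorial : ℝ) / (poch (2 * α) n * Real.Gamma α)) *
    ∑ k ∈ Finset.range (n / 2 + 1),
      (-1 : ℝ) ^ k * 2 ^ (n - 2 * k) * Real.Gamma (((n - k : ℕ) : ℝ) + α) /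
          ((k.factorial : ℝ) * ((n - 2 * k).factorial : ℝ)) *
          (u - v * Real.cos φ) ^ (n - 2 * k) *
          (u ^ 2 + v ^ 2 - 2 * u * v * Real.cos φ) ^ k

/-- The Bessel product kernel `K_B^α(u,v,w)`. -/
def besselKernel (α : ℝ) (u v w : ℝ) : ℝ :=
  if |u - v| ≤ w ∧ w ≤ u + v then
    (2 : ℝ) ^ (-2 * α + 1) * Cconst α *
      ((((u + v) ^ 2 - w ^ 2) * (w ^ 2 - (u - v) ^ 2)) ^ (α - 1 / 2)) / (u * v * w) ^ (2 * α)
  else 0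

/-- The constant `M_{κ,n} = 2 (2/n)^{κn−n/2} Γ(κn+1−n/2)`. -/
def Mconst (κ : ℝ) (n : ℕ) : ℝ :=
  2 * (2 / (n : ℝ)) ^ (κ * n - (n : ℝ) / 2) * Real.Gamma (κ * n + 1 - (n : ℝ) / 2)

/-- The measure `dμ_{κ,n}(x) = M_{κ,n}⁻¹ |x|^{2κ+2/n−2} dx` on `ℝ`. -/
def mu (κ : ℝ) (n : ℕ) : Measure ℝ :=
  volume.withDensity fun x => ENNReal.ofReal ((Mconst κ n)⁻¹ * |x| ^ (2 * κ + 2 / (n : ℝ) - 2))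

/-- The generalized Hankel function `B_λ^{κ,n}(x)`. -/
def genHankel (κ : ℝ) (n : ℕ) (lam x : ℝ) : ℂ :=
  ((besselJ (κ * n - (n : ℝ) / 2) ((n : ℝ) * |lam * x| ^ (1 / (n : ℝ))) : ℝ) : ℂ) +
    (-Complex.I) ^ n * ((n : ℂ) / 2) ^ n *
      ((Real.Gamma (κ * n - (n : ℝ) / 2 + 1) / Real.Gamma (κ * n + (n : ℝ) / 2 + 1) : ℝ) : ℂ) *
      ((lam * x : ℝ) : ℂ) *
      ((besselJ (κ * n + (n : ℝ) / 2) ((n : ℝ) * |lam * x| ^ (1 / (n : ℝ))) : ℝ) : ℂ)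

/-- The even part `B^{κ,n}_{λ,e}(x) = j_{κn−n/2}(n|λx|^{1/n})`. -/
def genHankelEven (κ : ℝ) (n : ℕ) (lam x : ℝ) : ℝ :=
  besselJ (κ * n - (n : ℝ) / 2) ((n : ℝ) * |lam * x| ^ (1 / (n : ℝ)))

/-- The odd part `B^{κ,n}_{λ,o}(x) = (n/2)^n (−i)^n λx/(κn−n/2+1)_n · j_{κn+n/2}(n|λx|^{1/n})`. -/
def genHankelOdd (κ : ℝ) (n : ℕ) (lam x : ℝ) : ℂ :=
  ((n : ℂ) / 2) ^ n * (-Complex.I) ^ n * ((lam * x : ℝ) : ℂ) /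
      ((poch (κ * n - (n : ℝ) / 2 + 1) n : ℝ) : ℂ) *
    ((besselJ (κ * n + (n : ℝ) / 2) ((n : ℝ) * |lam * x| ^ (1 / (n : ℝ))) : ℝ) : ℂ)

/-- `σ^n_{x,y,z} = (|x|^{2/n} + |y|^{2/n} − |z|^{2/n})/(2|xy|^{1/n})`. -/
def sigmaP (n : ℕ) (x y z : ℝ) : ℝ :=
  (|x| ^ (2 / (n : ℝ)) + |y| ^ (2 / (n : ℝ)) - |z| ^ (2 / (n : ℝ))) /
    (2 * |x * y| ^ (1 / (n : ℝ)))

/-- `ξ_{κ,n}(x,y,z) = (n! sgn(xy)/(2κn−n)_n) C_n^{κn−n/2}(σ^n_{x,y,z})`. -/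
def xiP (κ : ℝ) (n : ℕ) (x y z : ℝ) : ℝ :=
  (n.factorial : ℝ) * Real.sign (x * y) / poch (2 * κ * n - n) n *
    gegenbauer (κ * n - (n : ℝ) / 2) n (sigmaP n x y z)

/-- The kernel `𝒦_{κ,n}(x,y,z)`. -/
def Kcal (κ : ℝ) (n : ℕ) (x y z : ℝ) : ℝ :=
  Mconst κ n / (2 * n) *
    besselKernel (κ * n - (n : ℝ) / 2) (|x| ^ (1 / (n : ℝ))) (|y| ^ (1 / (n : ℝ)))
      (|z| ^ (1 / (n : ℝ))) *
    (1 + (-1 : ℝ) ^ n * xiP κ n x y z + xiP κ n z x y + xiP κ n y z x)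

/-- The generalized translation operator `τ_x^{κ,n} f(y) = ∫ f(z) dν^{κ,n}_{x,y}(z)`,
where `dν^{κ,n}_{x,y} = 𝒦_{κ,n}(x,y,·) dμ_{κ,n}` if `xy ≠ 0`, `ν_{x,0} = δ_x`, `ν_{0,y} = δ_y`. -/
def tau (κ : ℝ) (n : ℕ) (x : ℝ) (f : ℝ → ℂ) (y : ℝ) : ℂ :=
  if x = 0 then f y
  else if y = 0 then f x
  else ∫ z, f z * ((Kcal κ n x y z : ℝ) : ℂ) ∂(mu κ n)

/-- The generalized convolution `f ⋆_{κ,n} g(x) = ∫ f(y) τ_x^{κ,n} g((−1)^n y) dμ_{κ,n}(y)`. -/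
def conv (κ : ℝ) (n : ℕ) (f g : ℝ → ℂ) (x : ℝ) : ℂ :=
  ∫ y, f y * tau κ n x g ((-1) ^ n * y) ∂(mu κ n)

/-- The generalized Hankel transform `ℱ_{κ,n} f(λ) = ∫ f(x) B_λ^{κ,n}(x) dμ_{κ,n}(x)`. -/
def Fkn (κ : ℝ) (n : ℕ) (f : ℝ → ℂ) (lam : ℝ) : ℂ :=
  ∫ x, f x * genHankel κ n lam x ∂(mu κ n)

/-- The Hankel transform of order `α`:
`ℋ_α(f)(λ) = (1/(2^{α−1} Γ(α+1))) ∫_0^∞ f(t) j_α(tλ) t^{2α+1} dt`. -/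
def HankelT (α : ℝ) (f : ℝ → ℂ) (lam : ℝ) : ℂ :=
  ((1 / ((2 : ℝ) ^ (α - 1) * Real.Gamma (α + 1)) : ℝ) : ℂ) *
    ∫ t in Ioi (0 : ℝ), f t * ((besselJ α (t * lam) * t ^ (2 * α + 1) : ℝ) : ℂ)

/-- The differential–reflection operator
`T^{κ,n} f(x) = |x|^{2(1−1/n)} [ f''(x) + (2κ/x) f'(x) − (κ/x²)(f(x) − f(−x)) ]`. -/
def Top (κ : ℝ) (n : ℕ) (f : ℝ → ℂ) (x : ℝ) : ℂ :=
  ((|x| ^ (2 * (1 - 1 / (n : ℝ))) : ℝ) : ℂ) *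
    (deriv (deriv f) x + ((2 * κ / x : ℝ) : ℂ) * deriv f x -
      ((κ / x ^ 2 : ℝ) : ℂ) * (f x - f (-x)))

private lemma congrD {f : ℝ → ℝ} {d e x : ℝ} (h : HasDerivAt f d x) (hde : d = e) :
    HasDerivAt f e x := hde ▸ h

/-- First piece of the derivative of the `k`-th summand of `psiN`. -/
def gtermP (α : ℝ) (n : ℕ) (X Q : ℝ) (k : ℕ) : ℝ :=
  ((-1 : ℝ) ^ k * 2 ^ (n - 2 * k) * Real.Gamma (((n - k : ℕ) : ℝ) + α) /
      ((k.factorial : ℝ) * ((n - 2 * k).factorial : ℝ)) *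
      (((n - 2 * k : ℕ) : ℝ) * X ^ (n - 2 * k - 1) * 1)) * Q ^ k

/-- Second piece of the derivative of the `k`-th summand of `psiN`. -/
def htermP (α : ℝ) (n : ℕ) (X Q : ℝ) (k : ℕ) : ℝ :=
  ((-1 : ℝ) ^ k * 2 ^ (n - 2 * k) * Real.Gamma (((n - k : ℕ) : ℝ) + α) /
      ((k.factorial : ℝ) * ((n - 2 * k).factorial : ℝ)) *
      X ^ (n - 2 * k)) * ((k : ℝ) * Q ^ (k - 1) * (2 * X))

/-- The `k`-th summand of `psiN` at level `n-1`. -/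
def ttermP (α : ℝ) (n : ℕ) (X Q : ℝ) (k : ℕ) : ℝ :=
  (-1 : ℝ) ^ k * 2 ^ (n - 1 - 2 * k) * Real.Gamma (((n - 1 - k : ℕ) : ℝ) + α) /
      ((k.factorial : ℝ) * ((n - 1 - 2 * k).factorial : ℝ)) *
      X ^ (n - 1 - 2 * k) * Q ^ k

private lemma L1 (α : ℝ) (hα : 0 < α) (n j m : ℕ) (hnm : n = 2 * j + 2 + m) (X Q : ℝ) :
    gtermP α n X Q j + htermP α n X Q (j + 1) =
      (2 * α + (n : ℝ) - 1) * ttermP α n X Q j := by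
  subst hnm
  simp only [gtermP, htermP, ttermP]
  have e2 : 2 * j + 2 + m - 2 * j - 1 = m + 1 := by omega
  have e1 : 2 * j + 2 + m - 2 * j = m + 2 := by omega
  have e3 : 2 * j + 2 + m - j = j + 2 + m := by omega
  have e4 : 2 * j + 2 + m - 2 * (j + 1) = m := by omega
  have e5 : 2 * j + 2 + m - (j + 1) = j + 1 + m := by omega
  have e6 : 2 * j + 2 + m - 1 - 2 * j = m + 1 := by omega
  have e7 : 2 * j + 2 + m - 1 - j = j + 1 + m := by omega
  have e8 : j + 1 - 1 = j := by omega
  rw [e2, e1, e3, e4, e5, e6, e7, e8]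
  have h0 : ((j + 1 + m : ℕ) : ℝ) + α ≠ 0 := by positivity
  have hG : Real.Gamma (((j + 2 + m : ℕ) : ℝ) + α) =
      (((j + 1 + m : ℕ) : ℝ) + α) * Real.Gamma (((j + 1 + m : ℕ) : ℝ) + α) := by
    have h1 : ((j + 2 + m : ℕ) : ℝ) + α = (((j + 1 + m : ℕ) : ℝ) + α) + 1 := by
      push_cast; ring
    rw [h1, Real.Gamma_add_one h0]
  rw [hG]
  have f1 : (((m + 2).factorial : ℕ) : ℝ) =
      ((m : ℝ) + 2) * ((m : ℝ) + 1) * (m.factorial : ℝ) := by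
    rw [Nat.factorial_succ, Nat.factorial_succ]; push_cast; ring
  have f2 : (((m + 1).factorial : ℕ) : ℝ) = ((m : ℝ) + 1) * (m.factorial : ℝ) := by
    rw [Nat.factorial_succ]; push_cast; ring
  have f3 : (((j + 1).factorial : ℕ) : ℝ) = ((j : ℝ) + 1) * (j.factorial : ℝ) := by
    rw [Nat.factorial_succ]; push_cast; ring
  rw [f1, f2, f3]
  have hjf : (j.factorial : ℝ) ≠ 0 := by positivity
  have hmf : (m.factorial : ℝ) ≠ 0 := by positivity
  push_cast
  field_simp
  ring

private lemma L2 (α : ℝ) (hα : 0 < α) (n j : ℕ) (hnm : n = 2 * j + 1) (X Q : ℝ) :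
    gtermP α n X Q j = (2 * α + (n : ℝ) - 1) * ttermP α n X Q j := by
  subst hnm
  simp only [gtermP, ttermP]
  have e2 : 2 * j + 1 - 2 * j - 1 = 0 := by omega
  have e1 : 2 * j + 1 - 2 * j = 1 := by omega
  have e3 : 2 * j + 1 - j = j + 1 := by omega
  have e4 : 2 * j + 1 - 1 - 2 * j = 0 := by omega
  have e5 : 2 * j + 1 - 1 - j = j := by omega
  rw [e2, e1, e3, e4, e5]
  have h0 : ((j : ℕ) : ℝ) + α ≠ 0 := by positivity
  have hG : Real.Gamma (((j + 1 : ℕ) : ℝ) + α) = (((j : ℕ) : ℝ) + α) * Real.Gamma (((j : ℕ) : ℝ) + α) := by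
    have h1 : ((j + 1 : ℕ) : ℝ) + α = (((j : ℕ) : ℝ) + α) + 1 := by push_cast; ring
    rw [h1, Real.Gamma_add_one h0]
  rw [hG]
  have hjf : (j.factorial : ℝ) ≠ 0 := by positivity
  norm_num [Nat.factorial]
  field_simp
  ring

private lemma Lc (α : ℝ) (hα : 0 < α) (n : ℕ) (hn : 1 ≤ n) :
    (n : ℝ) * (((n - 1).factorial : ℝ) / (poch (2 * α) (n - 1) * Real.Gamma α)) =
      (2 * α + (n : ℝ) - 1) * ((n.factorial : ℝ) / (poch (2 * α) n * Real.Gamma α)) := by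
  obtain ⟨p, rfl⟩ : ∃ p, n = p + 1 := ⟨n - 1, by omega⟩
  simp only [poch, Nat.add_sub_cancel]
  have h1 : Real.Gamma (2 * α + ((p + 1 : ℕ) : ℝ)) =
      (2 * α + (p : ℝ)) * Real.Gamma (2 * α + (p : ℝ)) := by
    have h2 : 2 * α + ((p + 1 : ℕ) : ℝ) = (2 * α + (p : ℝ)) + 1 := by push_cast; ring
    rw [h2, Real.Gamma_add_one (by positivity)]
  rw [h1, Nat.factorial_succ]
  have g1 : Real.Gamma (2 * α + (p : ℝ)) ≠ 0 := (Real.Gamma_pos_of_pos (by positivity)).ne'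
  have g2 : Real.Gamma (2 * α) ≠ 0 := (Real.Gamma_pos_of_pos (by positivity)).ne'
  have g3 : Real.Gamma α ≠ 0 := (Real.Gamma_pos_of_pos hα).ne'
  have g4 : (p.factorial : ℝ) ≠ 0 := by positivity
  push_cast
  field_simp
  ring

private lemma key' (α : ℝ) (hα : 0 < α) (n : ℕ) (hn : 1 ≤ n) (X Q : ℝ) :
    ∑ k ∈ Finset.range (n / 2 + 1), (gtermP α n X Q k + htermP α n X Q k) =
      (2 * α + (n : ℝ) - 1) * ∑ k ∈ Finset.range ((n - 1) / 2 + 1), ttermP α n X Q k := by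
  have h0 : htermP α n X Q 0 = 0 := by simp [htermP]
  rcases Nat.even_or_odd n with he | ho
  · obtain ⟨r, hr⟩ := he
    obtain ⟨t, rfl⟩ : ∃ t, n = 2 * t + 2 := ⟨r - 1, by omega⟩
    have r1 : (2 * t + 2) / 2 = t + 1 := by omega
    have r2 : (2 * t + 2 - 1) / 2 = t := by omega
    rw [r1, r2, Finset.sum_add_distrib,
      Finset.sum_range_succ (fun k => gtermP α (2 * t + 2) X Q k) (t + 1),
      Finset.sum_range_succ' (fun k => htermP α (2 * t + 2) X Q k) (t + 1)]
    have hg : gtermP α (2 * t + 2) X Q (t + 1) = 0 := by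
      have h4 : 2 * t + 2 - 2 * (t + 1) = 0 := by omega
      simp [gtermP, h4]
    rw [hg, h0, add_zero, add_zero, ← Finset.sum_add_distrib, Finset.mul_sum]
    refine Finset.sum_congr rfl fun j hj => ?_
    have hj' : j < t + 1 := Finset.mem_range.mp hj
    exact L1 α hα (2 * t + 2) j (2 * (t - j)) (by omega) X Q
  · obtain ⟨t, rfl⟩ := ho
    have r1 : (2 * t + 1) / 2 = t := by omega
    have r2 : (2 * t + 1 - 1) / 2 = t := by omega
    rw [r1, r2, Finset.sum_add_distrib,
      Finset.sum_range_succ (fun k => gtermP α (2 * t + 1) X Q k) t,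
      Finset.sum_range_succ' (fun k => htermP α (2 * t + 1) X Q k) t,
      Finset.mul_sum,
      Finset.sum_range_succ (fun k => (2 * α + ((2 * t + 1 : ℕ) : ℝ) - 1) * ttermP α (2 * t + 1) X Q k) t,
      h0, add_zero]
    have hL2 : gtermP α (2 * t + 1) X Q t =
        (2 * α + ((2 * t + 1 : ℕ) : ℝ) - 1) * ttermP α (2 * t + 1) X Q t :=
      L2 α hα (2 * t + 1) t rfl X Q
    have hs : ∑ j ∈ Finset.range t, (gtermP α (2 * t + 1) X Q j + htermP α (2 * t + 1) X Q (j + 1)) =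
        ∑ j ∈ Finset.range t, (2 * α + ((2 * t + 1 : ℕ) : ℝ) - 1) * ttermP α (2 * t + 1) X Q j :=
      Finset.sum_congr rfl fun j hj => by
        have hj' : j < t := Finset.mem_range.mp hj
        exact L1 α hα (2 * t + 1) j (2 * (t - j) - 1) (by omega) X Q
    rw [Finset.sum_add_distrib] at hs
    linarith [hs, hL2]

private lemma key (α : ℝ) (hα : 0 < α) (n : ℕ) (hn : 1 ≤ n) (X Q : ℝ) :
    ((n.factorial : ℝ) / (poch (2 * α) n * Real.Gamma α)) *
        ∑ k ∈ Finset.range (n / 2 + 1), (gtermP α n X Q k + htermP α n X Q k) =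
      (n : ℝ) * (((n - 1).factorial : ℝ) / (poch (2 * α) (n - 1) * Real.Gamma α) *
        ∑ k ∈ Finset.range ((n - 1) / 2 + 1), ttermP α n X Q k) := by
  have hC := Lc α hα n hn
  rw [key' α hα n hn X Q, ← mul_assoc, ← mul_assoc,
    mul_comm ((n.factorial : ℝ) / (poch (2 * α) n * Real.Gamma α)) (2 * α + (n : ℝ) - 1), ← hC]

/-- `∂_u ψ_n(u,v,φ) = n ψ_{n−1}(u,v,φ)`. -/
theorem statement2 (α : ℝ) (hα : 0 < α) (n : ℕ) (hn : 1 ≤ n) (u v φ : ℝ)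
    (hφ : φ ∈ Set.Icc (0 : ℝ) π) :
    HasDerivAt (fun u => psiN α n u v φ) ((n : ℝ) * psiN α (n - 1) u v φ) u := by
  have hX : HasDerivAt (fun w : ℝ => w - v * Real.cos φ) 1 u :=
    (hasDerivAt_id u).sub_const _
  have hQ : HasDerivAt (fun w : ℝ => w ^ 2 + v ^ 2 - 2 * w * v * Real.cos φ)
      (2 * (u - v * Real.cos φ)) u := by
    have h := ((hasDerivAt_pow 2 u).add_const (v ^ 2)).sub
      ((((hasDerivAt_id u).const_mul 2).mul_const v).mul_const (Real.cos φ))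
    exact congrD h (by push_cast; ring)
  have hterm : ∀ k : ℕ, HasDerivAt
      (fun w : ℝ => (-1 : ℝ) ^ k * 2 ^ (n - 2 * k) * Real.Gamma (((n - k : ℕ) : ℝ) + α) /
          ((k.factorial : ℝ) * ((n - 2 * k).factorial : ℝ)) *
          (w - v * Real.cos φ) ^ (n - 2 * k) *
          (w ^ 2 + v ^ 2 - 2 * w * v * Real.cos φ) ^ k)
      (gtermP α n (u - v * Real.cos φ) (u ^ 2 + v ^ 2 - 2 * u * v * Real.cos φ) k +
        htermP α n (u - v * Real.cos φ) (u ^ 2 + v ^ 2 - 2 * u * v * Real.cos φ) k) u := by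
    intro k
    exact ((hX.pow (n - 2 * k)).const_mul _).mul (hQ.pow k)
  have hsum := HasDerivAt.fun_sum (u := Finset.range (n / 2 + 1)) (fun k _ => hterm k)
  have hfull := hsum.const_mul ((n.factorial : ℝ) / (poch (2 * α) n * Real.Gamma α))
  exact congrD hfull
    (key α hα n hn (u - v * Real.cos φ) (u ^ 2 + v ^ 2 - 2 * u * v * Real.cos φ))

end Paper
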